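/- Let n, r be positive integers and c, d integers, with 𝒹₁ = gcd(c−d, n). For x, y ∈ ℤ^r both satisfying B·x ≡ 0 and B·y ≡ 0 (mod n), where B is the r×r matrix with diagonal entries c and off-diagonal entries d, write x = x₁·(1,...,1) + (n/𝒹₁)·(0, v₂, ..., v_r) and y = y₁·(1,...,1) + (n/𝒹₁)·(0, v₂', ..., v_r') (mod n). Then (c+(r−1)d)·(y₁ − x₁) is congruent modulo n to an integer multiple of d·n/𝒹₁. -/

import Mathlib

theorem stmt_19 (n r : ℕ) (hn : 0 < n) (hr : 0 < r) (c d : ℤ)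
    (B : Matrix (Fin r) (Fin r) ℤ)
    (hB : ∀ i j, B i j = if i = j then c else d)
    (x y : Fin r → ℤ)
    (hx : ∀ i, B.mulVec x i ≡ 0 [ZMOD (n : ℤ)])
    (hy : ∀ i, B.mulVec y i ≡ 0 [ZMOD (n : ℤ)])
    (x1 y1 : ℤ) (v v' : Fin r → ℤ)
    (hv0 : v ⟨0, hr⟩ = 0) (hv'0 : v' ⟨0, hr⟩ = 0)
    (hxdec : ∀ i, x i ≡ x1 + ((n : ℤ) / (Int.gcd (c - d) n : ℤ)) * v i [ZMOD (n : ℤ)])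
    (hydec : ∀ i, y i ≡ y1 + ((n : ℤ) / (Int.gcd (c - d) n : ℤ)) * v' i [ZMOD (n : ℤ)]) :
    ∃ k : ℤ, (c + (r - 1) * d) * (y1 - x1) ≡ k * (d * n / (Int.gcd (c - d) n : ℤ)) [ZMOD (n : ℤ)] := by
  set g : ℤ := (Int.gcd (c - d) n : ℤ) with hg
  have hgdvd : g ∣ (n : ℤ) := Int.gcd_dvd_right _ _
  set m : ℤ := (n : ℤ) / g with hm
  have hdm : d * (n : ℤ) / g = d * m := Int.mul_ediv_assoc d hgdvd
  -- key lemma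
  have hkey : ∀ (z : Fin r → ℤ) (z1 : ℤ) (w : Fin r → ℤ), w ⟨0, hr⟩ = 0 →
      (∀ i, B.mulVec z i ≡ 0 [ZMOD (n : ℤ)]) →
      (∀ i, z i ≡ z1 + m * w i [ZMOD (n : ℤ)]) →
      ((0 : ℤ) ≡ (c + (r - 1) * d) * z1 + d * m * (∑ j, w j) [ZMOD (n : ℤ)]) := by
    intro z z1 w hw0 hz hzdec
    have h0 := hz ⟨0, hr⟩
    rw [← ZMod.intCast_eq_intCast_iff] at h0 ⊢
    have hzd : ∀ i, ((z i : ZMod n)) = ((z1 + m * w i : ℤ) : ZMod n) := by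
      intro i; rw [ZMod.intCast_eq_intCast_iff]; exact hzdec i
    have hmv : B.mulVec z ⟨0, hr⟩ = ∑ j, B ⟨0, hr⟩ j * z j := by
      simp [Matrix.mulVec, dotProduct]
    rw [hmv] at h0
    push_cast at h0 ⊢
    rw [← h0]
    have : ∀ j, ((B ⟨0, hr⟩ j : ZMod n)) * (z j : ZMod n)
        = (B ⟨0, hr⟩ j : ZMod n) * ((z1 : ZMod n) + (m : ZMod n) * (w j : ZMod n)) := by
      intro j
      have := hzd j
      push_cast at this
      rw [this]
    calc (∑ j, (B ⟨0, hr⟩ j : ZMod n) * (z j : ZMod n))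
        = ∑ j, (B ⟨0, hr⟩ j : ZMod n) * ((z1 : ZMod n) + (m : ZMod n) * (w j : ZMod n)) := by
          exact Finset.sum_congr rfl fun j _ => this j
      _ = ∑ j, (((d : ZMod n) + (if (⟨0, hr⟩ : Fin r) = j then ((c : ZMod n) - d) else 0))
            * ((z1 : ZMod n) + (m : ZMod n) * (w j : ZMod n))) := by
          refine Finset.sum_congr rfl fun j _ => ?_
          rw [hB]
          by_cases h : (⟨0, hr⟩ : Fin r) = j <;> simp [h] <;> push_cast <;> ring
      _ = (c : ZMod n) * z1 + ((r : ZMod n) - 1) * d * z1 + (d : ZMod n) * m * (∑ j, (w j : ZMod n)) := by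
          simp only [add_mul, mul_add, Finset.sum_add_distrib, ite_mul, zero_mul,
            Finset.sum_ite_eq, Finset.mem_univ, if_true, hw0, Int.cast_zero, mul_zero, add_zero,
            Finset.sum_const, Finset.card_univ, Fintype.card_fin, nsmul_eq_mul, mul_assoc,
            Finset.mul_sum]
          ring
      _ = ((c : ZMod n) + ((r : ZMod n) - 1) * d) * z1 + (d : ZMod n) * m * (∑ j, (w j : ZMod n)) := by
          ring
  have hxk := hkey x x1 v hv0 hx hxdec
  have hyk := hkey y y1 v' hv'0 hy hydec
  refine ⟨(∑ j, v j) - (∑ j, v' j), ?_⟩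
  rw [hdm, Int.modEq_iff_dvd]
  have h1 := Int.modEq_iff_dvd.mp hxk
  have h2 := Int.modEq_iff_dvd.mp hyk
  have h3 := dvd_sub h2 h1
  have heq : ((∑ j, v j) - (∑ j, v' j)) * (d * m) - (c + (r - 1) * d) * (y1 - x1)
      = -(((c + (↑r - 1) * d) * y1 + d * m * ∑ j, v' j - 0)
          - ((c + (↑r - 1) * d) * x1 + d * m * ∑ j, v j - 0)) := by ring
  rw [heq]
  exact h3.neg_right
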